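/- arXiv:1610.00888 — 4 statements merged into one kernel-verified Lean document; each statement's English description precedes it below -/
import Mathlib

section
/- Generalized Gordan theorem for functionals: Let E be a real normed space, Λ a nonempty set, and for each λ ∈ Λ let x_λ* ∈ E* be a continuous linear functional such that {x_λ* : λ ∈ Λ} is norm-bounded in E*. Then there exists x ∈ E with sup_{λ∈Λ} x_λ*(x) < 0 if and only if there is no positive linear functional L on ℓ^∞(Λ) with L(𝟏) = 1 satisfying L({x_λ*(x)}_{λ∈Λ}) = 0 for every x ∈ E. -/
open scoped ENNReal

/-- The constant-one function in `ℓ^∞(Λ)`. -/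
noncomputable def lpinfOne (Λ : Type*) : lp (fun _ : Λ => ℝ) ∞ :=
  ⟨fun _ => (1 : ℝ), memℓp_infty ⟨1, by rintro x ⟨l, rfl⟩; simp⟩⟩

lemma lp_bddAbove {Λ : Type*} (Φ : lp (fun _ : Λ => ℝ) ∞) :
    BddAbove (Set.range fun l => Φ l) := by
  have h := lp.memℓp Φ
  rw [memℓp_infty_iff] at h
  obtain ⟨C, hC⟩ := h
  exact ⟨C, by rintro y ⟨i, rfl⟩; exact (le_abs_self _).trans (hC ⟨i, rfl⟩)⟩

set_option maxHeartbeats 1000000 in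
/-- Gordan's theorem for an arbitrary norm-bounded family of continuous linear
functionals on a real normed space: the system `sup_λ x_λ*(x) < 0` is solvable
iff no positive normalized linear functional `L` on `ℓ^∞(Λ)` annihilates the family. -/
theorem stmt5 (E Λ : Type*) [NormedAddCommGroup E] [NormedSpace ℝ E] [Nonempty Λ]
    (g : Λ → (E →L[ℝ] ℝ)) (hbdd : ∃ M : ℝ, ∀ l, ‖g l‖ ≤ M)
    (F : E → lp (fun _ : Λ => ℝ) ∞) (hF : ∀ x l, F x l = g l x) :
    (∃ x : E, (⨆ l, (g l x : EReal)) < 0) ↔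
      ¬ ∃ L : lp (fun _ : Λ => ℝ) ∞ →ₗ[ℝ] ℝ,
          (∀ Φ : lp (fun _ : Λ => ℝ) ∞, (∀ l, 0 ≤ Φ l) → 0 ≤ L Φ) ∧
          L (lpinfOne Λ) = 1 ∧
          ∀ x : E, L (F x) = 0 := by
  constructor
  · rintro ⟨x, hx⟩ ⟨L, hpos, hone, hann⟩
    -- find a real c < 0 dominating all g l x
    obtain ⟨b, hsb, hb0⟩ := exists_between hx
    inhabit Λ
    have hbot : (⊥ : EReal) < b :=
      lt_of_le_of_lt (by simp) (lt_of_le_of_lt (le_iSup (fun l => ((g l x : ℝ) : EReal)) default) hsb)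
    have htop : b < (⊤ : EReal) := lt_of_lt_of_le hb0 le_top
    set c : ℝ := b.toReal with hc
    have hbc : (c : EReal) = b := EReal.coe_toReal htop.ne hbot.ne'
    have hc0 : c < 0 := by
      have := hb0; rw [← hbc] at this; exact_mod_cast this
    have hle : ∀ l, (g l x : ℝ) ≤ c := by
      intro l
      have h1 : ((g l x : ℝ) : EReal) ≤ b :=
        le_of_lt (lt_of_le_of_lt (le_iSup (fun l => ((g l x : ℝ) : EReal)) l) hsb)
      rw [← hbc] at h1; exact_mod_cast h1
    -- the element c • 1 - F x is pointwise nonnegative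
    set Ψ : lp (fun _ : Λ => ℝ) ∞ := c • lpinfOne Λ - F x with hΨ
    have hΨpos : ∀ l, 0 ≤ Ψ l := by
      intro l
      have : Ψ l = c * 1 - g l x := by
        rw [hΨ]
        simp only [lp.coeFn_sub, lp.coeFn_smul, Pi.sub_apply, Pi.smul_apply, smul_eq_mul, hF]
        rfl
      rw [this, mul_one]
      linarith [hle l]
    have := hpos Ψ hΨpos
    rw [hΨ, map_sub, map_smul, hone, hann, smul_eq_mul, mul_one, sub_zero] at this
    exact absurd this (not_le.mpr hc0)
  · intro hnoL
    by_contra hnox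
    push_neg at hnox
    apply hnoL
    -- from hnox : ∀ x, 0 ≤ ⨆ l, (g l x : EReal)
    have hsup0 : ∀ x : E, 0 ≤ ⨆ l, (g l x : ℝ) := by
      intro x
      by_contra h
      push_neg at h
      have hb : BddAbove (Set.range fun l => (g l x : ℝ)) := by
        obtain ⟨M, hM⟩ := hbdd
        refine ⟨M * ‖x‖, ?_⟩
        rintro y ⟨l, rfl⟩
        exact le_trans (Real.le_norm_self _)
          (((g l).le_opNorm x).trans (mul_le_mul_of_nonneg_right (hM l) (norm_nonneg x)))
      have : (⨆ l, ((g l x : ℝ) : EReal)) ≤ ((⨆ l, (g l x : ℝ) : ℝ) : EReal) :=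
        iSup_le fun l => EReal.coe_le_coe_iff.mpr (le_ciSup hb l)
      have h2 : (⨆ l, ((g l x : ℝ) : EReal)) < 0 :=
        lt_of_le_of_lt this (by exact_mod_cast h)
      exact absurd h2 (not_lt.mpr (hnox x))
    -- F is additive / homogeneous
    have hFadd : ∀ x y : E, F (x + y) = F x + F y := fun x y =>
      lp.ext (funext fun l => by simp [hF, lp.coeFn_add, Pi.add_apply])
    have hFsmul : ∀ (c : ℝ) (x : E), F (c • x) = c • F x := fun c x =>
      lp.ext (funext fun l => by simp [hF, lp.coeFn_smul, Pi.smul_apply])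
    have hF0 : F 0 = 0 := lp.ext (funext fun l => by simp [hF])
    -- the map T (x, c) = F x + c • 1
    let T : (E × ℝ) →ₗ[ℝ] lp (fun _ : Λ => ℝ) ∞ :=
      { toFun := fun p => F p.1 + p.2 • lpinfOne Λ
        map_add' := by
          rintro ⟨x, c⟩ ⟨y, d⟩
          simp only [Prod.fst_add, Prod.snd_add, hFadd, add_smul]
          abel
        map_smul' := by
          rintro r ⟨x, c⟩
          simp only [Prod.smul_fst, Prod.smul_snd, hFsmul, smul_eq_mul, mul_smul,
            RingHom.id_apply, smul_add] }
    let q : (E × ℝ) →ₗ[ℝ] ℝ := LinearMap.snd ℝ E ℝ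
    have hker : LinearMap.ker T ≤ LinearMap.ker q := by
      rintro ⟨x, c⟩ hTx
      have h1 : F x + c • lpinfOne Λ = 0 := hTx
      have h2 : ∀ l, (g l x : ℝ) + c = 0 := by
        intro l
        have := congrArg (fun Φ : lp (fun _ : Λ => ℝ) ∞ => Φ l) h1
        have h3 : (F x l) + c * 1 = 0 := this
        rw [hF, mul_one] at h3; exact h3
      inhabit Λ
      have hcx : ∀ l, (g l x : ℝ) = -c := fun l => by linarith [h2 l]
      have hx1 : (⨆ l, (g l x : ℝ)) = -c := by
        simp [hcx]
      have hx2 : (⨆ l, (g l (-x) : ℝ)) = c := by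
        have : ∀ l, (g l (-x) : ℝ) = c := fun l => by
          rw [map_neg, hcx l, neg_neg]
        simp [this]
      have e1 := hsup0 x; rw [hx1] at e1
      have e2 := hsup0 (-x); rw [hx2] at e2
      have : c = 0 := le_antisymm (by linarith) e2
      simpa [q] using this
    -- the partial functional on the range of T
    let φ : LinearMap.range T →ₗ[ℝ] ℝ :=
      (Submodule.liftQ (LinearMap.ker T) q hker).comp
        (T.quotKerEquivRange.symm : (LinearMap.range T) →ₗ[ℝ] (E × ℝ) ⧸ LinearMap.ker T)
    have hφ : ∀ v : E × ℝ, ∀ (h : T v ∈ LinearMap.range T), φ ⟨T v, h⟩ = v.2 := by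
      intro v h
      have h1 : (⟨T v, h⟩ : LinearMap.range T) =
          T.quotKerEquivRange (Submodule.Quotient.mk v) := by
        ext; rw [LinearMap.quotKerEquivRange_apply_mk]
      simp only [φ, LinearMap.comp_apply, h1, LinearEquiv.coe_coe,
        LinearEquiv.symm_apply_apply]
      rfl
    -- the sublinear dominating functional N Φ = sup_l Φ l
    set N : lp (fun _ : Λ => ℝ) ∞ → ℝ := fun Φ => ⨆ l, Φ l with hN
    have hNhom : ∀ c : ℝ, 0 < c → ∀ Φ, N (c • Φ) = c * N Φ := by
      intro c hc Φ
      rw [hN]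
      simp only
      rw [Real.mul_iSup_of_nonneg hc.le]
      exact iSup_congr fun l => by simp [lp.coeFn_smul]
    have hNadd : ∀ Φ Ψ, N (Φ + Ψ) ≤ N Φ + N Ψ := by
      intro Φ Ψ
      refine ciSup_le fun l => ?_
      have h1 : (Φ + Ψ) l = Φ l + Ψ l := by simp [lp.coeFn_add]
      rw [h1]
      exact add_le_add (le_ciSup (lp_bddAbove Φ) l) (le_ciSup (lp_bddAbove Ψ) l)
    -- domination on the domain
    let f : (lp (fun _ : Λ => ℝ) ∞) →ₗ.[ℝ] ℝ := ⟨LinearMap.range T, φ⟩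
    have hdom : ∀ v : f.domain, f v ≤ N v := by
      rintro ⟨_, ⟨⟨x, c⟩, rfl⟩⟩
      have hfv : f.toFun ⟨T (x, c), LinearMap.mem_range_self T (x, c)⟩ = c :=
        hφ (x, c) _
      rw [show (f ⟨T (x, c), LinearMap.mem_range_self T (x, c)⟩ : ℝ) = c from hfv]
      have hval : ∀ l, (T (x, c)) l = g l x + c := by
        intro l
        show (F x l) + c * 1 = _
        rw [hF, mul_one]
      have hb : BddAbove (Set.range fun l => (T (x, c)) l) := lp_bddAbove _
      inhabit Λ
      have : c + 0 ≤ c + ⨆ l, (g l x : ℝ) := by linarith [hsup0 x]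
      calc (c : ℝ) = c + 0 := (add_zero c).symm
        _ ≤ c + ⨆ l, (g l x : ℝ) := this
        _ = ⨆ l, (c + g l x) := by
            obtain ⟨M, hM⟩ := hbdd
            have hbx : BddAbove (Set.range fun l => (g l x : ℝ)) := by
              refine ⟨M * ‖x‖, ?_⟩
              rintro y ⟨l, rfl⟩
              exact le_trans (Real.le_norm_self _) (((g l).le_opNorm x).trans
                (mul_le_mul_of_nonneg_right (hM l) (norm_nonneg x)))
            rw [add_ciSup hbx]
        _ = N (T (x, c)) := by
            rw [hN]; congr 1; funext l; rw [hval l]; ring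
    obtain ⟨L, hLext, hLle⟩ := exists_extension_of_le_sublinear f N hNhom hNadd hdom
    refine ⟨L, ?_, ?_, ?_⟩
    · intro Φ hΦ
      have h1 : L (-Φ) ≤ N (-Φ) := hLle (-Φ)
      have h2 : N (-Φ) ≤ 0 := ciSup_le fun l => by
        have : (-Φ) l = -(Φ l) := by simp [lp.coeFn_neg]
        rw [this]; linarith [hΦ l]
      have h3 : L (-Φ) = -L Φ := by rw [map_neg]
      linarith
    · have hT01 : T (0, 1) = lpinfOne Λ := by simp [T, hF0]
      have h3 := hLext ⟨T (0, 1), LinearMap.mem_range_self T (0, 1)⟩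
      have h4 : (f ⟨T (0, 1), LinearMap.mem_range_self T (0, 1)⟩ : ℝ) = 1 :=
        hφ (0, 1) _
      rw [← hT01]
      rw [show ((⟨T (0, 1), LinearMap.mem_range_self T (0, 1)⟩ :
        f.domain) : lp (fun _ : Λ => ℝ) ∞) = T (0, 1) from rfl] at h3
      rw [h3, h4]
    · intro x
      have hTx : T (x, 0) = F x := by simp [T]
      have h3 := hLext ⟨T (x, 0), LinearMap.mem_range_self T (x, 0)⟩
      have h4 : (f ⟨T (x, 0), LinearMap.mem_range_self T (x, 0)⟩ : ℝ) = 0 :=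
        hφ (x, 0) _
      rw [← hTx]
      rw [show ((⟨T (x, 0), LinearMap.mem_range_self T (x, 0)⟩ :
        f.domain) : lp (fun _ : Λ => ℝ) ∞) = T (x, 0) from rfl] at h3
      rw [h3, h4]
end

section
/- Characterization of infsup-convexity via the alternative: Let Λ and X be nonempty sets and {f_λ}_{λ∈Λ} a family of real-valued functions on X with λ ↦ f_λ(x) bounded for each x ∈ X. Then {f_λ}_{λ∈Λ} is infsup-convex on X if and only if for every α ∈ ℝ exactly one of the following holds: (a1) there exists x ∈ X with sup_{λ∈Λ} f_λ(x) < α; (a2) there exists a positive linear functional L on ℓ^∞(Λ) with L(𝟏)=1 and inf_{x∈X} L({f_λ(x)}_{λ∈Λ}) ≥ α. -/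
open scoped ENNReal
set_option synthInstance.maxHeartbeats 1000000
set_option maxHeartbeats 1000000
set_option linter.unusedSectionVars false

/-- A family `{f_λ}` of real-valued functions on `X` is infsup-convex on `X`. -/
def InfSupConvex {Λ X : Type*} (f : Λ → X → ℝ) : Prop :=
  ∀ m : ℕ, 0 < m → ∀ t : Fin m → ℝ, (∀ j, 0 ≤ t j) → (∑ j, t j) = 1 →
    ∀ x : Fin m → X,
      ⨅ x' : X, ⨆ l, (f l x' : EReal) ≤ ⨆ l, ((∑ j, t j * f l (x j) : ℝ) : EReal)

section Aux

variable {Λ X : Type*} [Nonempty Λ] [Nonempty X]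

private lemma lp_apply_le_norm (Φ : lp (fun _ : Λ => ℝ) ∞) (l : Λ) : |Φ l| ≤ ‖Φ‖ :=
  lp.norm_apply_le_norm ENNReal.top_ne_zero Φ l

private lemma bdd_of_lp (Φ : lp (fun _ : Λ => ℝ) ∞) : BddAbove (Set.range fun l => Φ l) :=
  ⟨‖Φ‖, by rintro r ⟨l, rfl⟩; exact (abs_le.1 (lp_apply_le_norm Φ l)).2⟩

private lemma ereal_coe_ciSup {g : Λ → ℝ} (hg : BddAbove (Set.range g)) :
    (⨆ l, (g l : EReal)) = ((⨆ l, g l : ℝ) : EReal) :=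
  (Monotone.map_ciSup_of_continuousAt (continuous_coe_real_ereal.continuousAt)
    (fun _ _ h => EReal.coe_le_coe_iff.2 h) hg).symm

private lemma bdd_aff (f : Λ → X → ℝ) (F : X → lp (fun _ : Λ => ℝ) ∞)
    (hF : ∀ x l, F x l = f l x) (Φ : lp (fun _ : Λ => ℝ) ∞)
    (m : ℕ) (t : Fin m → ℝ) (x : Fin m → X) :
    BddAbove (Set.range fun l => Φ l + ∑ j, t j * f l (x j)) := by
  refine ⟨‖Φ‖ + ∑ j, |t j| * ‖F (x j)‖, ?_⟩
  rintro r ⟨l, rfl⟩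
  have h1 : Φ l ≤ ‖Φ‖ := (abs_le.1 (lp_apply_le_norm Φ l)).2
  refine add_le_add h1 (Finset.sum_le_sum fun j _ => ?_)
  calc t j * f l (x j) ≤ |t j * f l (x j)| := le_abs_self _
    _ = |t j| * |f l (x j)| := abs_mul _ _
    _ ≤ |t j| * ‖F (x j)‖ := by
        refine mul_le_mul_of_nonneg_left ?_ (abs_nonneg _)
        rw [← hF (x j) l]; exact lp_apply_le_norm (F (x j)) l

private lemma bdd_sum (f : Λ → X → ℝ) (F : X → lp (fun _ : Λ => ℝ) ∞)
    (hF : ∀ x l, F x l = f l x) (m : ℕ) (t : Fin m → ℝ) (x : Fin m → X) :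
    BddAbove (Set.range fun l => ∑ j, t j * f l (x j)) := by
  have h := bdd_aff f F hF 0 m t x
  simpa using h

private lemma L_le_ciSup (L : lp (fun _ : Λ => ℝ) ∞ →ₗ[ℝ] ℝ)
    (hpos : ∀ Φ, (∀ l : Λ, 0 ≤ Φ l) → 0 ≤ L Φ) (hone : L (lpinfOne Λ) = 1)
    (Φ : lp (fun _ : Λ => ℝ) ∞) : L Φ ≤ ⨆ l, Φ l := by
  have h0 : 0 ≤ L ((⨆ l, Φ l) • lpinfOne Λ - Φ) := by
    refine hpos _ fun l => ?_
    have h : Φ l ≤ ⨆ l, Φ l := le_ciSup (bdd_of_lp Φ) l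
    have hc : ((⨆ l, Φ l) • lpinfOne Λ - Φ) l = (⨆ l, Φ l) * 1 - Φ l := by
      rw [congrFun (lp.coeFn_sub ((⨆ l, Φ l) • lpinfOne Λ) Φ) l, Pi.sub_apply,
        congrFun (lp.coeFn_smul (⨆ l, Φ l) (lpinfOne Λ)) l, Pi.smul_apply, smul_eq_mul]
      rfl
    rw [hc]; linarith
  rw [map_sub, map_smul, hone, smul_eq_mul, mul_one, sub_nonneg] at h0
  exact h0

private lemma exists_L (f : Λ → X → ℝ) (F : X → lp (fun _ : Λ => ℝ) ∞)
    (hF : ∀ x l, F x l = f l x) (hconv : InfSupConvex f) (α : ℝ)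
    (hlow : ∀ x, α ≤ ⨆ l, f l x) :
    ∃ L : lp (fun _ : Λ => ℝ) ∞ →ₗ[ℝ] ℝ,
      (∀ Φ, (∀ l : Λ, 0 ≤ Φ l) → 0 ≤ L Φ) ∧ L (lpinfOne Λ) = 1 ∧ ∀ x, α ≤ L (F x) := by
  classical
  have bddf : ∀ x : X, BddAbove (Set.range fun l => f l x) := fun x => by
    have := bdd_of_lp (F x); simpa [hF] using this
  -- key convexity consequence
  have hkey : ∀ (m : ℕ) (t : Fin m → ℝ) (x : Fin m → X), (∀ j, 0 ≤ t j) →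
      (∑ j, t j) * α ≤ ⨆ l, ∑ j, t j * f l (x j) := by
    intro m t x ht
    rcases eq_or_lt_of_le (Finset.sum_nonneg fun j _ => ht j) with hT | hT
    · have hz : ∀ j ∈ Finset.univ, t j = 0 :=
        (Finset.sum_eq_zero_iff_of_nonneg (fun j _ => ht j)).1 hT.symm
      have hz' : ∀ l : Λ, ∑ j, t j * f l (x j) = 0 := fun l =>
        Finset.sum_eq_zero fun j hj => by rw [hz j hj, zero_mul]
      simp only [hz', ciSup_const]
      rw [← hT, zero_mul]
    · have hm : 0 < m := by
        rcases Nat.eq_zero_or_pos m with h | h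
        · subst h; simp at hT
        · exact h
      set T := ∑ j, t j with hTdef
      have hconv' := hconv m hm (fun j => t j / T) (fun j => div_nonneg (ht j) hT.le)
        (by rw [← Finset.sum_div, div_self hT.ne']) x
      have hL : (α : EReal) ≤ ⨅ x' : X, ⨆ l, (f l x' : EReal) := by
        refine le_iInf fun x' => ?_
        rw [ereal_coe_ciSup (bddf x')]
        exact EReal.coe_le_coe_iff.2 (hlow x')
      rw [ereal_coe_ciSup (bdd_sum f F hF m (fun j => t j / T) x)] at hconv'
      have hαs : α ≤ ⨆ l, ∑ j, (t j / T) * f l (x j) :=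
        EReal.coe_le_coe_iff.1 (hL.trans hconv')
      calc T * α ≤ T * ⨆ l, ∑ j, (t j / T) * f l (x j) :=
            mul_le_mul_of_nonneg_left hαs hT.le
        _ = ⨆ l, T * ∑ j, (t j / T) * f l (x j) := Real.mul_iSup_of_nonneg hT.le _
        _ = ⨆ l, ∑ j, t j * f l (x j) := by
            congr 1; funext l
            rw [Finset.mul_sum]
            refine Finset.sum_congr rfl fun j _ => ?_
            field_simp
  -- the sublinear functional
  set S : lp (fun _ : Λ => ℝ) ∞ → Set ℝ := fun Φ =>
    {r | ∃ m : ℕ, ∃ t : Fin m → ℝ, ∃ x : Fin m → X, (∀ j, 0 ≤ t j) ∧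
      r = (⨆ l, (Φ l + ∑ j, t j * f l (x j))) - (∑ j, t j) * α} with hSdef
  have hmem0 : ∀ Φ, (⨆ l, Φ l) ∈ S Φ := fun Φ =>
    ⟨0, Fin.elim0, Fin.elim0, fun j => j.elim0, by simp⟩
  have hne : ∀ Φ, (S Φ).Nonempty := fun Φ => ⟨_, hmem0 Φ⟩
  have hlb : ∀ Φ, ∀ r ∈ S Φ, -‖Φ‖ ≤ r := by
    rintro Φ r ⟨m, t, x, ht, rfl⟩
    have h2 : (⨆ l, ∑ j, t j * f l (x j)) ≤ (⨆ l, (Φ l + ∑ j, t j * f l (x j))) + ‖Φ‖ := by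
      refine ciSup_le fun l => ?_
      have ha := (abs_le.1 (lp_apply_le_norm Φ l)).1
      have hb : Φ l + ∑ j, t j * f l (x j) ≤ ⨆ l, (Φ l + ∑ j, t j * f l (x j)) :=
        le_ciSup (bdd_aff f F hF Φ m t x) l
      linarith
    have h3 := hkey m t x ht
    linarith
  have hbdd : ∀ Φ, BddBelow (S Φ) := fun Φ => ⟨-‖Φ‖, fun r hr => hlb Φ r hr⟩
  set p : lp (fun _ : Λ => ℝ) ∞ → ℝ := fun Φ => sInf (S Φ) with hpdef
  have p_le : ∀ Φ, ∀ r ∈ S Φ, p Φ ≤ r := fun Φ r hr => csInf_le (hbdd Φ) hr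
  have le_p : ∀ Φ b, (∀ r ∈ S Φ, b ≤ r) → b ≤ p Φ := fun Φ b h => le_csInf (hne Φ) h
  have p_le_sup : ∀ Φ, p Φ ≤ ⨆ l, Φ l := fun Φ => p_le Φ _ (hmem0 Φ)
  have smul_mem : ∀ (c : ℝ), 0 < c → ∀ Φ r, r ∈ S Φ → c * r ∈ S (c • Φ) := by
    rintro c hc Φ r ⟨m, t, x, ht, rfl⟩
    refine ⟨m, fun j => c * t j, x, fun j => mul_nonneg hc.le (ht j), ?_⟩
    have hcoord : ∀ l, (c • Φ) l + ∑ j, (c * t j) * f l (x j)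
        = c * (Φ l + ∑ j, t j * f l (x j)) := by
      intro l
      rw [congrFun (lp.coeFn_smul c Φ) l, Pi.smul_apply, smul_eq_mul, mul_add, Finset.mul_sum]
      ring_nf
    have h1 : (⨆ l, ((c • Φ) l + ∑ j, (c * t j) * f l (x j)))
        = c * ⨆ l, (Φ l + ∑ j, t j * f l (x j)) := by
      simp only [hcoord]
      exact (Real.mul_iSup_of_nonneg hc.le _).symm
    have h2 : (∑ j, c * t j) = c * ∑ j, t j := by rw [Finset.mul_sum]
    rw [h1, h2]; ring
  have p_smul : ∀ (c : ℝ), 0 < c → ∀ Φ, p (c • Φ) = c * p Φ := by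
    intro c hc Φ
    refine le_antisymm ?_ ?_
    · have h : p (c • Φ) / c ≤ p Φ := le_p Φ _ fun r hr => by
        rw [div_le_iff₀ hc, mul_comm]
        exact p_le _ _ (smul_mem c hc Φ r hr)
      have := (div_le_iff₀ hc).1 h
      linarith
    · refine le_p _ _ fun r hr => ?_
      have h' : c⁻¹ * r ∈ S Φ := by
        have h := smul_mem c⁻¹ (by positivity) (c • Φ) r hr
        rwa [smul_smul, inv_mul_cancel₀ hc.ne', one_smul] at h
      have h2 := p_le Φ _ h'
      calc c * p Φ ≤ c * (c⁻¹ * r) := mul_le_mul_of_nonneg_left h2 hc.le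
        _ = r := by field_simp
  have p_add : ∀ Φ Ψ, p (Φ + Ψ) ≤ p Φ + p Ψ := by
    intro Φ Ψ
    have key : ∀ r ∈ S Φ, ∀ r' ∈ S Ψ, p (Φ + Ψ) ≤ r + r' := by
      rintro r ⟨m, t, x, ht, rfl⟩ r' ⟨m', t', x', ht', rfl⟩
      set u : Fin (m + m') → ℝ := Fin.append t t' with hu_def
      set y : Fin (m + m') → X := Fin.append x x' with hy_def
      have hu : ∀ j, 0 ≤ u j := fun j => by
        refine Fin.addCases (motive := fun j => 0 ≤ u j) (fun i => ?_) (fun i => ?_) j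
        · simpa [u, Fin.append_left] using ht i
        · simpa [u, Fin.append_right] using ht' i
      have hsum : ∀ l, ∑ j, u j * f l (y j)
          = (∑ j, t j * f l (x j)) + ∑ j, t' j * f l (x' j) := fun l => by
        simp [u, y, Fin.sum_univ_add, Fin.append_left, Fin.append_right]
      have hsumu : (∑ j, u j) = (∑ j, t j) + ∑ j, t' j := by
        simp [u, Fin.sum_univ_add, Fin.append_left, Fin.append_right]
      have hsup : (⨆ l, ((Φ + Ψ) l + ∑ j, u j * f l (y j)))
          ≤ (⨆ l, (Φ l + ∑ j, t j * f l (x j))) + ⨆ l, (Ψ l + ∑ j, t' j * f l (x' j)) := by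
        refine ciSup_le fun l => ?_
        have hc : (Φ + Ψ) l = Φ l + Ψ l := by
          rw [congrFun (lp.coeFn_add Φ Ψ) l, Pi.add_apply]
        rw [hc, hsum l]
        have h1 := le_ciSup (bdd_aff f F hF Φ m t x) l
        have h2 := le_ciSup (bdd_aff f F hF Ψ m' t' x') l
        linarith
      have hthis := p_le (Φ + Ψ) _ ⟨m + m', u, y, hu, rfl⟩
      rw [hsumu, add_mul] at hthis
      linarith
    have h2 : ∀ r' ∈ S Ψ, p (Φ + Ψ) - p Φ ≤ r' := fun r' hr' => by
      have h := le_p Φ (p (Φ + Ψ) - r') fun r hr => by linarith [key r hr r' hr']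
      linarith
    have := le_p Ψ _ h2
    linarith
  have hp0 : (0 : ℝ) ≤ p 0 := le_p 0 0 fun r hr => by simpa using hlb 0 r hr
  obtain ⟨g, -, hg⟩ := exists_extension_of_le_sublinear ⟨⊥, 0⟩ p p_smul p_add
    (fun x => by
      obtain ⟨v, hv⟩ := x
      simp only [Submodule.mem_bot] at hv
      subst hv
      simpa using hp0)
  refine ⟨g, ?_, ?_, ?_⟩
  · intro Φ hΦ
    have h1 : g (-Φ) ≤ p (-Φ) := hg _
    have h3 : (⨆ l, (-Φ) l) ≤ 0 := ciSup_le fun l => by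
      have hc : (-Φ) l = -(Φ l) := by rw [congrFun (lp.coeFn_neg Φ) l, Pi.neg_apply]
      rw [hc]; linarith [hΦ l]
    have h4 : g (-Φ) ≤ 0 := h1.trans ((p_le_sup _).trans h3)
    rw [map_neg] at h4; linarith
  · have hone_coord : ∀ l : Λ, (lpinfOne Λ) l = 1 := fun _ => rfl
    have h1 : g (lpinfOne Λ) ≤ 1 := by
      refine (hg _).trans ((p_le_sup _).trans ?_)
      simp only [hone_coord, ciSup_const]; exact le_refl 1
    have h2 : g (-(lpinfOne Λ)) ≤ -1 := by
      refine (hg _).trans ((p_le_sup _).trans ?_)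
      have hc : ∀ l : Λ, (-(lpinfOne Λ)) l = -1 := fun l => by
        rw [congrFun (lp.coeFn_neg (lpinfOne Λ)) l, Pi.neg_apply, hone_coord]
      simp only [hc, ciSup_const]; exact le_refl _
    rw [map_neg] at h2; linarith
  · intro x
    have hmem : (-α) ∈ S (-(F x)) := by
      refine ⟨1, fun _ => 1, fun _ => x, fun _ => zero_le_one, ?_⟩
      have hcoord : ∀ l, (-(F x)) l + ∑ _j : Fin 1, (1 : ℝ) * f l x = 0 := fun l => by
        have hc : (-(F x)) l = -(F x l) := by
          rw [congrFun (lp.coeFn_neg (F x)) l, Pi.neg_apply]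
        rw [hc, hF]
        simp
      simp only [hcoord, ciSup_const]
      simp
    have h1 := (hg (-(F x))).trans (p_le _ _ hmem)
    rw [map_neg] at h1; linarith

end Aux

/-- A pointwise-bounded family is infsup-convex on `X` if and only if for every `α ∈ ℝ`
exactly one of the alternatives (a1), (a2) holds. -/
theorem stmt7 (Λ X : Type*) [Nonempty Λ] [Nonempty X]
    (f : Λ → X → ℝ)
    (F : X → lp (fun _ : Λ => ℝ) ∞) (hF : ∀ x l, F x l = f l x) :
    InfSupConvex f ↔
      ∀ α : ℝ, Xor'
        (∃ x : X, (⨆ l, (f l x : EReal)) < (α : EReal))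
        (∃ L : lp (fun _ : Λ => ℝ) ∞ →ₗ[ℝ] ℝ,
          (∀ Φ : lp (fun _ : Λ => ℝ) ∞, (∀ l, 0 ≤ Φ l) → 0 ≤ L Φ) ∧
          L (lpinfOne Λ) = 1 ∧
          (α : EReal) ≤ ⨅ x : X, (L (F x) : EReal)) := by
  have bddf : ∀ x : X, BddAbove (Set.range fun l => f l x) := fun x => by
    have := bdd_of_lp (F x); simpa [hF] using this
  have supfc : ∀ x : X, (⨆ l, (f l x : EReal)) = ((⨆ l, f l x : ℝ) : EReal) := fun x =>
    ereal_coe_ciSup (bddf x)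
  constructor
  · intro hconv α
    by_cases ha : ∃ x : X, (⨆ l, (f l x : EReal)) < (α : EReal)
    · refine Or.inl ⟨ha, ?_⟩
      rintro ⟨L, hpos, hone, hinf⟩
      obtain ⟨x, hx⟩ := ha
      have h1 : α ≤ L (F x) := EReal.coe_le_coe_iff.1 (hinf.trans (iInf_le _ x))
      have h2 : L (F x) ≤ ⨆ l, (F x) l := L_le_ciSup L hpos hone (F x)
      have h2' : (⨆ l, (F x) l) = ⨆ l, f l x := by simp only [hF]
      have h3 : (⨆ l, f l x) < α := by
        rw [supfc x] at hx
        exact_mod_cast hx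
      rw [h2'] at h2
      linarith
    · refine Or.inr ⟨?_, ha⟩
      have hlow : ∀ x, α ≤ ⨆ l, f l x := by
        intro x
        have h := not_lt.1 fun h => ha ⟨x, h⟩
        rw [supfc x] at h
        exact_mod_cast h
      obtain ⟨L, h1, h2, h3⟩ := exists_L f F hF hconv α hlow
      exact ⟨L, h1, h2, le_iInf fun x => EReal.coe_le_coe_iff.2 (h3 x)⟩
  · intro halt m hm t ht htsum x
    by_contra hcon
    push_neg at hcon
    rw [ereal_coe_ciSup (bdd_sum f F hF m t x)] at hcon
    obtain ⟨β, hβ1, hβ2⟩ := EReal.lt_iff_exists_real_btwn.1 hcon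
    have hβ1' : (⨆ l, ∑ j, t j * f l (x j)) < β := EReal.coe_lt_coe_iff.1 hβ1
    rcases halt β with ⟨h1, -⟩ | ⟨h2, -⟩
    · obtain ⟨x', hx'⟩ := h1
      exact absurd (hβ2.trans_le (iInf_le _ x')) (not_lt.2 hx'.le)
    · obtain ⟨L, hpos, hone, hinf⟩ := h2
      have hL : ∀ j, β ≤ L (F (x j)) := fun j =>
        EReal.coe_le_coe_iff.1 (hinf.trans (iInf_le _ (x j)))
      set Φ : lp (fun _ : Λ => ℝ) ∞ := ∑ j, t j • F (x j) with hΦdef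
      have hLΦ : L Φ = ∑ j, t j * L (F (x j)) := by
        rw [hΦdef, map_sum]
        exact Finset.sum_congr rfl fun j _ => by rw [map_smul, smul_eq_mul]
      have h5 : β ≤ L Φ := by
        rw [hLΦ]
        calc β = ∑ j, t j * β := by rw [← Finset.sum_mul, htsum, one_mul]
          _ ≤ ∑ j, t j * L (F (x j)) :=
            Finset.sum_le_sum fun j _ => mul_le_mul_of_nonneg_left (hL j) (ht j)
      have hΦl : ∀ l, Φ l = ∑ j, t j * f l (x j) := fun l => by
        rw [hΦdef]
        rw [congrFun (lp.coeFn_sum (fun j => t j • F (x j)) Finset.univ) l, Finset.sum_apply]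
        refine Finset.sum_congr rfl fun j _ => ?_
        rw [congrFun (lp.coeFn_smul (t j) (F (x j))) l, Pi.smul_apply, smul_eq_mul, hF]
      have h6 : L Φ ≤ ⨆ l, ∑ j, t j * f l (x j) := by
        have := L_le_ciSup L hpos hone Φ
        simpa only [hΦl] using this
      linarith
end

section
/- Key inequality in the Z-matrix lemma: Let N ≥ 1, let A be an N×N real symmetric matrix, b ∈ ℝ^N, c ∈ ℝ such that the block matrix [[A, b],[b^T, 2c]] is a Z-matrix, and let q(x) = (1/2)x^T A x + b^T x + c. Then for all m ≥ 1, t in the probability simplex Δ_m, and x_1,…,x_m ∈ ℝ^N, defining x_0 ∈ ℝ^N_+ by (x_0)_k = sqrt(Σ_{j=1}^m t_j ((x_j)_k)^2), one has q(x_0) ≤ Σ_{j=1}^m t_j q(x_j). -/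
open Matrix

/-- A Z-matrix: a real symmetric matrix with nonpositive off-diagonal entries. -/
def IsZMatrix {n : Type*} [DecidableEq n] (M : Matrix n n ℝ) : Prop :=
  M.IsSymm ∧ ∀ i j, i ≠ j → M i j ≤ 0

/-- Weighted Cauchy–Schwarz: `∑ t f g ≤ √(∑ t f²) · √(∑ t g²)` for `t ≥ 0`. -/
lemma weighted_cs {m : ℕ} (t : Fin m → ℝ) (ht : ∀ j, 0 ≤ t j) (f g : Fin m → ℝ) :
    ∑ j, t j * (f j * g j) ≤
      Real.sqrt (∑ j, t j * f j ^ 2) * Real.sqrt (∑ j, t j * g j ^ 2) := by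
  have h := Finset.sum_mul_sq_le_sq_mul_sq Finset.univ
    (fun j => Real.sqrt (t j) * f j) (fun j => Real.sqrt (t j) * g j)
  have e1 : ∀ j : Fin m, (Real.sqrt (t j) * f j) * (Real.sqrt (t j) * g j)
      = t j * (f j * g j) := fun j => by
    rw [mul_mul_mul_comm, Real.mul_self_sqrt (ht j)]
  have e2 : ∀ j : Fin m, (Real.sqrt (t j) * f j) ^ 2 = t j * f j ^ 2 := by
    intro j; rw [mul_pow, Real.sq_sqrt (ht j)]
  have e3 : ∀ j : Fin m, (Real.sqrt (t j) * g j) ^ 2 = t j * g j ^ 2 := by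
    intro j; rw [mul_pow, Real.sq_sqrt (ht j)]
  simp only [e1, e2, e3] at h
  calc ∑ j, t j * (f j * g j) ≤ |∑ j, t j * (f j * g j)| := le_abs_self _
    _ = Real.sqrt ((∑ j, t j * (f j * g j)) ^ 2) := (Real.sqrt_sq_eq_abs _).symm
    _ ≤ Real.sqrt ((∑ j, t j * f j ^ 2) * ∑ j, t j * g j ^ 2) := Real.sqrt_le_sqrt h
    _ = _ := Real.sqrt_mul (Finset.sum_nonneg fun j _ =>
        mul_nonneg (ht j) (sq_nonneg _)) _

/-- Key inequality for Z-matrix quadratic data: with `x₀` defined componentwise by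
`(x₀)_k = sqrt(Σ_j t_j (x_j)_k²)`, one has `q(x₀) ≤ Σ_j t_j q(x_j)`. -/
theorem stmt10 (N : ℕ) (hN : 1 ≤ N)
    (A : Matrix (Fin N) (Fin N) ℝ) (b : Fin N → ℝ) (c : ℝ)
    (hZ : IsZMatrix (Matrix.fromBlocks A (Matrix.replicateCol (Fin 1) b)
      (Matrix.replicateRow (Fin 1) b) (Matrix.of fun _ _ => 2 * c)))
    (q : (Fin N → ℝ) → ℝ)
    (hq : ∀ x, q x = (1 / 2) * (x ⬝ᵥ A.mulVec x) + b ⬝ᵥ x + c)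
    (m : ℕ) (hm : 0 < m) (t : Fin m → ℝ) (ht : ∀ j, 0 ≤ t j) (ht1 : (∑ j, t j) = 1)
    (x : Fin m → (Fin N → ℝ)) :
    q (fun k => Real.sqrt (∑ j, t j * (x j k) ^ 2)) ≤ ∑ j, t j * q (x j) := by
  set u : Fin N → ℝ := fun k => Real.sqrt (∑ j, t j * (x j k) ^ 2) with hu
  have hb : ∀ k, b k ≤ 0 := fun k => by
    have := hZ.2 (Sum.inl k) (Sum.inr 0) (by simp)
    simpa [Matrix.fromBlocks] using this
  have hA : ∀ k l, k ≠ l → A k l ≤ 0 := fun k l hkl => by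
    have := hZ.2 (Sum.inl k) (Sum.inl l) (by simpa using hkl)
    simpa [Matrix.fromBlocks] using this
  have husq : ∀ k, u k ^ 2 = ∑ j, t j * (x j k) ^ 2 := fun k =>
    Real.sq_sqrt (Finset.sum_nonneg fun j _ => mul_nonneg (ht j) (sq_nonneg _))
  -- key componentwise inequalities
  have keyA : ∀ k l, A k l * (u k * u l) ≤ A k l * (∑ j, t j * (x j k * x j l)) := by
    intro k l
    rcases eq_or_ne k l with rfl | hkl
    · have huk : u k * u k = ∑ j, t j * (x j k * x j k) := by
        have h := husq k
        simp only [sq] at h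
        rw [h]
      rw [huk]
    · exact mul_le_mul_of_nonpos_left
        (weighted_cs t ht (fun j => x j k) (fun j => x j l)) (hA k l hkl)
  have keyB : ∀ k, b k * u k ≤ b k * (∑ j, t j * x j k) := by
    intro k
    have hcs : ∑ j, t j * x j k ≤ u k := by
      have h := weighted_cs t ht (fun j => x j k) (fun _ => 1)
      simpa [ht1] using h
    exact mul_le_mul_of_nonpos_left hcs (hb k)
  -- quadratic form as a double sum
  have hquad : ∀ v : Fin N → ℝ, v ⬝ᵥ A.mulVec v = ∑ k, ∑ l, A k l * (v k * v l) := by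
    intro v
    simp only [dotProduct, mulVec, Finset.mul_sum]
    exact Finset.sum_congr rfl fun k _ => Finset.sum_congr rfl fun l _ => by ring
  have hLHS : q u = (1/2) * ∑ k, ∑ l, A k l * (u k * u l) + (∑ k, b k * u k) + c := by
    rw [hq, hquad]; rfl
  have hRHS : ∑ j, t j * q (x j)
      = (1/2) * ∑ k, ∑ l, A k l * (∑ j, t j * (x j k * x j l))
        + (∑ k, b k * (∑ j, t j * x j k)) + c := by
    calc ∑ j, t j * q (x j)
        = ∑ j, ((1/2) * (∑ k, ∑ l, t j * (A k l * (x j k * x j l)))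
            + (∑ k, t j * (b k * x j k)) + t j * c) := by
          refine Finset.sum_congr rfl fun j _ => ?_
          rw [hq, hquad]
          simp only [dotProduct, ← Finset.mul_sum]
          ring
      _ = (1/2) * (∑ j, ∑ k, ∑ l, t j * (A k l * (x j k * x j l)))
            + (∑ j, ∑ k, t j * (b k * x j k)) + ∑ j, t j * c := by
          rw [Finset.sum_add_distrib, Finset.sum_add_distrib, ← Finset.mul_sum]
      _ = (1/2) * ∑ k, ∑ l, A k l * (∑ j, t j * (x j k * x j l))
            + (∑ k, b k * (∑ j, t j * x j k)) + c := by
          congr 1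
          · congr 1
            · congr 1
              rw [Finset.sum_comm]
              refine Finset.sum_congr rfl fun k _ => ?_
              rw [Finset.sum_comm]
              refine Finset.sum_congr rfl fun l _ => ?_
              rw [Finset.mul_sum]
              exact Finset.sum_congr rfl fun j _ => by ring
            · rw [Finset.sum_comm]
              refine Finset.sum_congr rfl fun k _ => ?_
              rw [Finset.mul_sum]
              exact Finset.sum_congr rfl fun j _ => by ring
          · rw [← Finset.sum_mul, ht1, one_mul]
  rw [hLHS, hRHS]
  gcongr ?_ + ?_ + c
  · have h := Finset.sum_le_sum (fun k (_ : k ∈ Finset.univ) =>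
      Finset.sum_le_sum (fun l (_ : l ∈ Finset.univ) => keyA k l))
    linarith
  · exact Finset.sum_le_sum fun k _ => keyB k
end

section
/- Karush–Kuhn–Tucker characterization under Slater's condition: In the same Z-matrix quadratic programming setting, assume additionally the Slater condition: there exists x¹ ∈ X with sup_{λ∈Λ} q_λ(x¹) < 0. Then x⁰ is an optimal solution of inf_{x∈X_0} q(x) if and only if there exists a positive continuous linear functional L on ℓ^∞(Λ) such that: x ↦ q(x) + L({q_λ(x)}_{λ∈Λ}) attains its infimum over X at x⁰; sup_{λ∈Λ} q_λ(x⁰) ≤ 0; and L({q_λ(x⁰)}_{λ∈Λ}) = 0. -/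
set_option maxHeartbeats 1000000

open Matrix
open scoped ENNReal

/-- Cauchy–Schwarz with weights, in sqrt form. -/
lemma sqrtCS {ι : Type*} (s : Finset ι) (t a e : ι → ℝ) (ht : ∀ i ∈ s, 0 ≤ t i)
    (ha : ∀ i ∈ s, 0 ≤ a i) (he : ∀ i ∈ s, 0 ≤ e i) :
    ∑ i ∈ s, t i * (a i * e i)
      ≤ Real.sqrt (∑ i ∈ s, t i * a i ^ 2) * Real.sqrt (∑ i ∈ s, t i * e i ^ 2) := by
  have h0 : 0 ≤ ∑ i ∈ s, t i * (a i * e i) :=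
    Finset.sum_nonneg fun i hi => mul_nonneg (ht i hi) (mul_nonneg (ha i hi) (he i hi))
  have key : (∑ i ∈ s, t i * (a i * e i)) ^ 2
      ≤ (∑ i ∈ s, t i * a i ^ 2) * (∑ i ∈ s, t i * e i ^ 2) := by
    have h := Finset.sum_mul_sq_le_sq_mul_sq s (fun i => Real.sqrt (t i) * a i)
      (fun i => Real.sqrt (t i) * e i)
    have e1 : ∑ i ∈ s, (Real.sqrt (t i) * a i) * (Real.sqrt (t i) * e i)
        = ∑ i ∈ s, t i * (a i * e i) := by
      refine Finset.sum_congr rfl fun i hi => ?_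
      have : Real.sqrt (t i) * Real.sqrt (t i) = t i := Real.mul_self_sqrt (ht i hi)
      calc Real.sqrt (t i) * a i * (Real.sqrt (t i) * e i)
          = (Real.sqrt (t i) * Real.sqrt (t i)) * (a i * e i) := by ring
        _ = t i * (a i * e i) := by rw [this]
    have e2 : ∑ i ∈ s, (Real.sqrt (t i) * a i) ^ 2 = ∑ i ∈ s, t i * a i ^ 2 := by
      refine Finset.sum_congr rfl fun i hi => ?_
      rw [mul_pow, Real.sq_sqrt (ht i hi)]
    have e3 : ∑ i ∈ s, (Real.sqrt (t i) * e i) ^ 2 = ∑ i ∈ s, t i * e i ^ 2 := by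
      refine Finset.sum_congr rfl fun i hi => ?_
      rw [mul_pow, Real.sq_sqrt (ht i hi)]
    rw [e1, e2, e3] at h; exact h
  calc ∑ i ∈ s, t i * (a i * e i) = Real.sqrt ((∑ i ∈ s, t i * (a i * e i)) ^ 2) :=
        (Real.sqrt_sq h0).symm
    _ ≤ Real.sqrt ((∑ i ∈ s, t i * a i ^ 2) * (∑ i ∈ s, t i * e i ^ 2)) :=
        Real.sqrt_le_sqrt key
    _ = _ := Real.sqrt_mul (Finset.sum_nonneg fun i hi =>
        mul_nonneg (ht i hi) (sq_nonneg _)) _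

lemma quadExpand {N : ℕ} (A : Matrix (Fin N) (Fin N) ℝ) (b : Fin N → ℝ) (c : ℝ)
    (x : Fin N → ℝ) :
    (1 / 2 : ℝ) * (x ⬝ᵥ A.mulVec x) + b ⬝ᵥ x + c
      = (1 / 2 : ℝ) * ∑ k, ∑ m, x k * (A k m * x m) + ∑ k, b k * x k + c := by
  simp [Matrix.mulVec, dotProduct, Finset.mul_sum]



/-- Jensen inequality for a Z-type quadratic along the hidden-convexity substitution. -/
lemma quadJensen {N : ℕ} (A : Matrix (Fin N) (Fin N) ℝ) (b : Fin N → ℝ) (c : ℝ)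
    (hA : ∀ i j, i ≠ j → A i j ≤ 0) (hb : ∀ i, b i ≤ 0)
    {ι : Type*} [Fintype ι] (t : ι → ℝ) (z : ι → Fin N → ℝ)
    (ht : ∀ i, 0 ≤ t i) (hts : ∑ i, t i = 1)
    (hz : ∀ i, ∀ k, 0 ≤ z i k) :
    (1 / 2 : ℝ) * ((fun k => Real.sqrt (∑ i, t i * z i k ^ 2)) ⬝ᵥ
        A.mulVec (fun k => Real.sqrt (∑ i, t i * z i k ^ 2))) +
      b ⬝ᵥ (fun k => Real.sqrt (∑ i, t i * z i k ^ 2)) + c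
    ≤ ∑ i, t i * ((1 / 2 : ℝ) * (z i ⬝ᵥ A.mulVec (z i)) + b ⬝ᵥ z i + c) := by
  classical
  set w : Fin N → ℝ := fun k => Real.sqrt (∑ i, t i * z i k ^ 2) with hw
  have hwnn : ∀ k, 0 ≤ w k := fun k => Real.sqrt_nonneg _
  have hwsq : ∀ k, w k ^ 2 = ∑ i, t i * z i k ^ 2 := fun k =>
    Real.sq_sqrt (Finset.sum_nonneg fun i _ => mul_nonneg (ht i) (sq_nonneg _))
  -- quadratic part, termwise
  have hquad : ∀ k, ∀ m : Fin N, w k * (A k m * w m)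
      ≤ ∑ i, t i * (z i k * (A k m * z i m)) := by
    intro k m
    by_cases hkm : k = m
    · subst hkm
      have h1 : w k * (A k k * w k) = A k k * (w k ^ 2) := by ring
      rw [h1, hwsq k, Finset.mul_sum]
      exact le_of_eq (Finset.sum_congr rfl fun i _ => by ring)
    · have hcs : ∑ i, t i * (z i k * z i m) ≤ w k * w m := by
        have := sqrtCS Finset.univ t (fun i => z i k) (fun i => z i m)
          (fun i _ => ht i) (fun i _ => hz i k) (fun i _ => hz i m)
        simpa [hw] using this
      calc w k * (A k m * w m) = A k m * (w k * w m) := by ring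
        _ ≤ A k m * ∑ i, t i * (z i k * z i m) :=
            mul_le_mul_of_nonpos_left hcs (hA k m hkm)
        _ = ∑ i, t i * (z i k * (A k m * z i m)) := by
            rw [Finset.mul_sum]; exact Finset.sum_congr rfl fun i _ => by ring
  -- linear part, termwise
  have hlin : ∀ k, b k * w k ≤ ∑ i, t i * (b k * z i k) := by
    intro k
    have hcs : ∑ i, t i * (z i k * 1) ≤ w k * Real.sqrt (∑ i, t i * (1:ℝ) ^ 2) :=
      sqrtCS Finset.univ t (fun i => z i k) (fun _ => 1)
        (fun i _ => ht i) (fun i _ => hz i k) (fun i _ => zero_le_one)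
    have h1 : Real.sqrt (∑ i, t i * (1:ℝ) ^ 2) = 1 := by simp [hts]
    rw [h1, mul_one] at hcs
    have hcs' : ∑ i, t i * z i k ≤ w k := by
      calc ∑ i, t i * z i k = ∑ i, t i * (z i k * 1) := by simp
        _ ≤ w k := hcs
    calc b k * w k ≤ b k * ∑ i, t i * z i k := mul_le_mul_of_nonpos_left hcs' (hb k)
      _ = ∑ i, t i * (b k * z i k) := by
          rw [Finset.mul_sum]; exact Finset.sum_congr rfl fun i _ => by ring
  have e1 : ∑ i, t i * ∑ k, ∑ m, z i k * (A k m * z i m)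
      = ∑ k, ∑ m, ∑ i, t i * (z i k * (A k m * z i m)) := by
    simp_rw [Finset.mul_sum]
    rw [Finset.sum_comm]
    exact Finset.sum_congr rfl fun k _ => Finset.sum_comm
  have e2 : ∑ i, t i * ∑ k, b k * z i k = ∑ k, ∑ i, t i * (b k * z i k) := by
    simp_rw [Finset.mul_sum]
    exact Finset.sum_comm
  have hRHS : ∑ i, t i * ((1 / 2 : ℝ) * (z i ⬝ᵥ A.mulVec (z i)) + b ⬝ᵥ z i + c)
      = (1 / 2 : ℝ) * ∑ k, ∑ m, (∑ i, t i * (z i k * (A k m * z i m)))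
        + ∑ k, (∑ i, t i * (b k * z i k)) + c := by
    calc ∑ i, t i * ((1 / 2 : ℝ) * (z i ⬝ᵥ A.mulVec (z i)) + b ⬝ᵥ z i + c)
        = ∑ i, ((1 / 2 : ℝ) * (t i * ∑ k, ∑ m, z i k * (A k m * z i m))
            + t i * ∑ k, b k * z i k + t i * c) := by
          refine Finset.sum_congr rfl fun i _ => ?_
          rw [quadExpand A b c (z i)]; ring
      _ = (1 / 2 : ℝ) * ∑ i, (t i * ∑ k, ∑ m, z i k * (A k m * z i m))
            + ∑ i, (t i * ∑ k, b k * z i k) + (∑ i, t i) * c := by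
          rw [Finset.sum_add_distrib, Finset.sum_add_distrib, ← Finset.mul_sum,
            ← Finset.sum_mul]
      _ = _ := by rw [hts, e1, e2, one_mul]
  rw [quadExpand, hRHS]
  refine add_le_add (add_le_add ?_ ?_) le_rfl
  · exact mul_le_mul_of_nonneg_left
      (Finset.sum_le_sum fun k _ => Finset.sum_le_sum fun m _ => hquad k m) (by norm_num)
  · exact Finset.sum_le_sum fun k _ => hlin k
/-- For Z-type quadratics, replacing `x` by `|x|` cannot increase the value. -/
lemma quadAbs {N : ℕ} (A : Matrix (Fin N) (Fin N) ℝ) (b : Fin N → ℝ) (c : ℝ)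
    (hA : ∀ i j, i ≠ j → A i j ≤ 0) (hb : ∀ i, b i ≤ 0) (x : Fin N → ℝ) :
    (1 / 2 : ℝ) * ((fun k => |x k|) ⬝ᵥ A.mulVec (fun k => |x k|))
        + b ⬝ᵥ (fun k => |x k|) + c
      ≤ (1 / 2 : ℝ) * (x ⬝ᵥ A.mulVec x) + b ⬝ᵥ x + c := by
  rw [quadExpand, quadExpand]
  refine add_le_add (add_le_add ?_ ?_) le_rfl
  · refine mul_le_mul_of_nonneg_left
      (Finset.sum_le_sum fun k _ => Finset.sum_le_sum fun m _ => ?_) (by norm_num)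
    by_cases hkm : k = m
    · subst hkm
      have : |x k| * (A k k * |x k|) = A k k * (x k * x k) := by
        rw [mul_left_comm, abs_mul_abs_self]
      rw [this]; exact le_of_eq (by ring)
    · have h1 : x k * x m ≤ |x k| * |x m| := by
        calc x k * x m ≤ |x k * x m| := le_abs_self _
          _ = |x k| * |x m| := abs_mul _ _
      calc |x k| * (A k m * |x m|) = A k m * (|x k| * |x m|) := by ring
        _ ≤ A k m * (x k * x m) := mul_le_mul_of_nonpos_left h1 (hA k m hkm)
        _ = x k * (A k m * x m) := by ring
  · exact Finset.sum_le_sum fun k _ =>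
      mul_le_mul_of_nonpos_left (le_abs_self _) (hb k)

/-- Extract sign information from the Z-matrix hypothesis on the block matrix. -/
lemma zSigns {N : ℕ} {A : Matrix (Fin N) (Fin N) ℝ} {b : Fin N → ℝ} {c : ℝ}
    (hZ : IsZMatrix (Matrix.fromBlocks A (Matrix.replicateCol (Fin 1) b)
      (Matrix.replicateRow (Fin 1) b) (Matrix.of fun _ _ => 2 * c))) :
    (∀ i j, i ≠ j → A i j ≤ 0) ∧ (∀ i, b i ≤ 0) := by
  constructor
  · intro i j hij
    have := hZ.2 (Sum.inl i) (Sum.inl j) (by simpa using hij)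
    simpa using this
  · intro i
    have := hZ.2 (Sum.inl i) (Sum.inr 0) (by simp)
    simpa using this

/-- Karush–Kuhn–Tucker characterization, under Slater's condition, of optimal solutions of
the (possibly infinite) quadratic program `inf { q(x) : x ∈ X, sup_λ q_λ(x) ≤ 0 }`
with Z-matrix data. -/
theorem stmt13 (N : ℕ) (hN : 1 ≤ N) (Λ : Type*) [Nonempty Λ]
    (X : Set (Fin N → ℝ)) (hX : ∀ x : Fin N → ℝ, (∀ k, 0 ≤ x k) → x ∈ X)
    -- the objective quadratic function
    (A : Matrix (Fin N) (Fin N) ℝ) (b : Fin N → ℝ) (c : ℝ)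
    (hZ : IsZMatrix (Matrix.fromBlocks A (Matrix.replicateCol (Fin 1) b)
      (Matrix.replicateRow (Fin 1) b) (Matrix.of fun _ _ => 2 * c)))
    (q : (Fin N → ℝ) → ℝ)
    (hq : ∀ x, q x = (1 / 2) * (x ⬝ᵥ A.mulVec x) + b ⬝ᵥ x + c)
    -- the constraint quadratic functions
    (A' : Λ → Matrix (Fin N) (Fin N) ℝ) (b' : Λ → Fin N → ℝ) (c' : Λ → ℝ)
    (hZ' : ∀ l, IsZMatrix (Matrix.fromBlocks (A' l) (Matrix.replicateCol (Fin 1) (b' l))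
      (Matrix.replicateRow (Fin 1) (b' l)) (Matrix.of fun _ _ => 2 * c' l)))
    (q' : Λ → (Fin N → ℝ) → ℝ)
    (hq' : ∀ l x, q' l x = (1 / 2) * (x ⬝ᵥ (A' l).mulVec x) + b' l ⬝ᵥ x + c' l)
    -- boundedness in λ of the constraint values, encoded by `F`
    (F : (Fin N → ℝ) → lp (fun _ : Λ => ℝ) ∞)
    (hF : ∀ x ∈ X, ∀ l : Λ, F x l = q' l x)
    -- feasible set, nonemptiness, optimal solution
    (X₀ : Set (Fin N → ℝ)) (hX₀ : X₀ = {x ∈ X | (⨆ l, (q' l x : EReal)) ≤ 0})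
    (hne : X₀.Nonempty)
    -- Slater condition
    (hslater : ∃ x₁ ∈ X, (⨆ l, (q' l x₁ : EReal)) < 0)
    (x₀ : Fin N → ℝ) (hx₀X : x₀ ∈ X) :
    (x₀ ∈ X₀ ∧ ∀ x ∈ X₀, q x₀ ≤ q x) ↔
      ∃ L : lp (fun _ : Λ => ℝ) ∞ →L[ℝ] ℝ,
        (∀ Φ : lp (fun _ : Λ => ℝ) ∞, (∀ l, 0 ≤ Φ l) → 0 ≤ L Φ) ∧
        (∀ x ∈ X, q x₀ + L (F x₀) ≤ q x + L (F x)) ∧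
        (⨆ l, (q' l x₀ : EReal)) ≤ 0 ∧
        L (F x₀) = 0 := by
  classical
  constructor
  · -- forward direction: optimality ⇒ multiplier
    rintro ⟨hx₀mem, hopt⟩
    obtain ⟨hA, hb⟩ := zSigns hZ
    have hA' : ∀ l, ∀ i j, i ≠ j → A' l i j ≤ 0 := fun l => (zSigns (hZ' l)).1
    have hb' : ∀ l, ∀ i, b' l i ≤ 0 := fun l => (zSigns (hZ' l)).2
    have hx₀mem' : x₀ ∈ X ∧ (⨆ l, (q' l x₀ : EReal)) ≤ 0 := by
      have h := hx₀mem; rw [hX₀] at h; exact h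
    have hx₀feas : ∀ l, q' l x₀ ≤ 0 := by
      intro l
      have h := (le_iSup (fun l => ((q' l x₀ : ℝ) : EReal)) l).trans hx₀mem'.2
      exact_mod_cast h
    -- abs-decrease facts
    have habsq : ∀ x : Fin N → ℝ, q (fun k => |x k|) ≤ q x := fun x => by
      rw [hq, hq]; exact quadAbs A b c hA hb x
    have habsq' : ∀ l, ∀ x : Fin N → ℝ, q' l (fun k => |x k|) ≤ q' l x := fun l x => by
      rw [hq', hq']; exact quadAbs (A' l) (b' l) (c' l) (hA' l) (hb' l) x
    -- Slater data
    obtain ⟨x₁, hx₁X, hx₁s⟩ := hslater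
    obtain ⟨δ, hδ, hx₁m⟩ : ∃ δ : ℝ, 0 < δ ∧ ∀ l, q' l x₁ ≤ -δ := by
      obtain ⟨zz, hz1, hz2⟩ := exists_between hx₁s
      have hztop : zz ≠ ⊤ := (hz2.trans_le le_top).ne
      have hzbot : zz ≠ ⊥ := by
        intro h; subst h; exact not_lt_bot hz1
      obtain ⟨r, rfl⟩ : ∃ r : ℝ, (r : EReal) = zz := ⟨zz.toReal, EReal.coe_toReal hztop hzbot⟩
      have hr0 : r < 0 := by exact_mod_cast hz2
      refine ⟨-r, by linarith, fun l => ?_⟩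
      have h := (le_iSup (fun l => ((q' l x₁ : ℝ) : EReal)) l).trans hz1.le
      have : q' l x₁ ≤ r := by exact_mod_cast h
      linarith
    set y₁ : Fin N → ℝ := fun k => |x₁ k| with hy₁
    have hy₁X : y₁ ∈ X := hX _ fun k => abs_nonneg _
    have hy₁m : ∀ l, q' l y₁ ≤ -δ := fun l => (habsq' l x₁).trans (hx₁m l)
    set Cc : ℝ := q y₁ - q x₀ with hCc
    set K : ℝ := max 0 (Cc / δ) with hK
    have hK0 : 0 ≤ K := le_max_left _ _
    have hKC : Cc ≤ δ * K := by
      have h1 : Cc / δ ≤ K := le_max_right _ _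
      have := (div_le_iff₀ hδ).mp h1
      linarith [this]
    -- the sup functional on ℓ^∞
    have hbddA : ∀ Φ : lp (fun _ : Λ => ℝ) ∞, BddAbove (Set.range fun l => Φ l) := by
      intro Φ
      refine ⟨‖Φ‖, ?_⟩
      rintro r ⟨l, rfl⟩
      have := lp.norm_apply_le_norm (by norm_num : (∞ : ℝ≥0∞) ≠ 0) Φ l
      rw [Real.norm_eq_abs] at this
      exact (le_abs_self _).trans this
    set S : lp (fun _ : Λ => ℝ) ∞ → ℝ := fun Φ => ⨆ l, Φ l with hSdef
    have hSle : ∀ (Φ : lp (fun _ : Λ => ℝ) ∞) (l : Λ), Φ l ≤ S Φ := fun Φ l => by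
      simp only [hSdef]; exact le_ciSup (hbddA Φ) l
    have hSmax : ∀ (Φ : lp (fun _ : Λ => ℝ) ∞) (a : ℝ), (∀ l, Φ l ≤ a) → S Φ ≤ a :=
      fun Φ a h => by simp only [hSdef]; exact ciSup_le h
    have hS0 : S 0 = 0 := by
      simp only [hSdef]
      have : ∀ l : Λ, (0 : lp (fun _ : Λ => ℝ) ∞) l = 0 := fun l => rfl
      simp [this]
    set p : lp (fun _ : Λ => ℝ) ∞ → ℝ := fun Φ => K * max (S Φ) 0 with hpdef
    have hp0 : p 0 = 0 := by simp [hpdef, hS0]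
    have hpnorm : ∀ Φ, p Φ ≤ K * ‖Φ‖ := by
      intro Φ
      simp only [hpdef]
      refine mul_le_mul_of_nonneg_left (max_le (hSmax Φ _ fun l => ?_) (norm_nonneg _)) hK0
      have := lp.norm_apply_le_norm (by norm_num : (∞ : ℝ≥0∞) ≠ 0) Φ l
      rw [Real.norm_eq_abs] at this
      exact (le_abs_self _).trans this
    have hpadd : ∀ Φ Ψ, p (Φ + Ψ) ≤ p Φ + p Ψ := by
      intro Φ Ψ
      have h1 : S (Φ + Ψ) ≤ S Φ + S Ψ := by
        refine hSmax _ _ fun l => ?_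
        have : (Φ + Ψ) l = Φ l + Ψ l := rfl
        rw [this]; exact add_le_add (hSle Φ l) (hSle Ψ l)
      have h2 : max (S (Φ + Ψ)) 0 ≤ max (S Φ) 0 + max (S Ψ) 0 :=
        max_le (h1.trans (add_le_add (le_max_left _ _) (le_max_left _ _)))
          (by positivity)
      simp only [hpdef]
      calc K * max (S (Φ + Ψ)) 0 ≤ K * (max (S Φ) 0 + max (S Ψ) 0) :=
            mul_le_mul_of_nonneg_left h2 hK0
        _ = K * max (S Φ) 0 + K * max (S Ψ) 0 := by ring
    have hphom : ∀ a : ℝ, 0 < a → ∀ Φ, p (a • Φ) = a * p Φ := by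
      intro a ha Φ
      have hSh : S (a • Φ) = a * S Φ := by
        apply le_antisymm
        · refine hSmax _ _ fun l => ?_
          have : (a • Φ) l = a * Φ l := rfl
          rw [this]; exact mul_le_mul_of_nonneg_left (hSle Φ l) ha.le
        · rw [← le_div_iff₀' ha]
          refine hSmax _ _ fun l => ?_
          rw [le_div_iff₀' ha]
          have : a * Φ l = (a • Φ) l := rfl
          rw [this]; exact hSle _ l
      simp only [hpdef, hSh]
      rcases le_total (S Φ) 0 with h | h
      · rw [max_eq_right (by nlinarith), max_eq_right h]; ring
      · rw [max_eq_left (by positivity), max_eq_left h]; ring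
    -- coordinates of finite combinations
    have hsum_apply : ∀ (n : ℕ) (t : Fin n → ℝ) (x : Fin n → (Fin N → ℝ)) (l : Λ),
        ((∑ i, t i • F (x i)) : lp (fun _ : Λ => ℝ) ∞) l = ∑ i, t i * (F (x i)) l := by
      intro n t x l
      rw [lp.coeFn_sum]
      rw [Finset.sum_apply]
      exact Finset.sum_congr rfl fun i _ => rfl
    -- the convex Mazur–Orlicz inequality
    have claim : ∀ (n : ℕ) (t : Fin n → ℝ) (x : Fin n → (Fin N → ℝ)),
        (∀ i, 0 ≤ t i) → (∀ i, x i ∈ X) → (∑ i, t i) = 1 →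
        q x₀ - ∑ i, t i * q (x i) ≤ p (∑ i, t i • F (x i)) := by
      intro n t x ht hxX hts
      set v := ∑ i, t i • F (x i) with hv
      have hvl : ∀ l, (v : lp (fun _ : Λ => ℝ) ∞) l = ∑ i, t i * q' l (x i) := by
        intro l
        rw [hv, hsum_apply]
        exact Finset.sum_congr rfl fun i _ => by rw [hF _ (hxX i) l]
      set ε : ℝ := max (S v) 0 with hε
      have hε0 : 0 ≤ ε := le_max_right _ _
      have hεv : ∀ l, ∑ i, t i * q' l (x i) ≤ ε := by
        intro l
        have h := hSle v l
        rw [hvl l] at h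
        exact h.trans (le_max_left _ _)
      set θ : ℝ := ε / (ε + δ) with hθ
      have hεδ : 0 < ε + δ := by linarith
      have hθ0 : 0 ≤ θ := div_nonneg hε0 hεδ.le
      have hθε : θ * (ε + δ) = ε := div_mul_cancel₀ _ hεδ.ne'
      have h1θε : (1 - θ) * (ε + δ) = δ := by
        have : (1 - θ) * (ε + δ) = (ε + δ) - θ * (ε + δ) := by ring
        rw [this, hθε]; ring
      have h1θ0 : 0 ≤ 1 - θ := by nlinarith
      set t' : Option (Fin n) → ℝ := fun o => Option.elim o θ (fun i => (1 - θ) * t i)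
        with ht'def
      set z : Option (Fin n) → (Fin N → ℝ) :=
        fun o => Option.elim o y₁ (fun i => fun k => |x i k|) with hzdef
      have ht' : ∀ o, 0 ≤ t' o := by
        rintro (_ | i)
        · exact hθ0
        · exact mul_nonneg h1θ0 (ht i)
      have ht's : ∑ o, t' o = 1 := by
        rw [Fintype.sum_option]
        simp only [ht'def, Option.elim]
        rw [← Finset.mul_sum, hts]
        ring
      have hznn : ∀ o, ∀ k, 0 ≤ z o k := by
        rintro (_ | i) k
        · exact abs_nonneg _
        · exact abs_nonneg _
      set w : Fin N → ℝ := fun k => Real.sqrt (∑ o, t' o * z o k ^ 2) with hwdef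
      have hwX : w ∈ X := hX _ fun k => Real.sqrt_nonneg _
      -- objective bound
      have hqw : q w ≤ θ * q y₁ + (1 - θ) * ∑ i, t i * q (x i) := by
        have hJ := quadJensen A b c hA hb t' z ht' ht's hznn
        calc q w = (1 / 2 : ℝ) * (w ⬝ᵥ A.mulVec w) + b ⬝ᵥ w + c := hq w
          _ ≤ ∑ o, t' o * ((1 / 2 : ℝ) * (z o ⬝ᵥ A.mulVec (z o)) + b ⬝ᵥ z o + c) := hJ
          _ = ∑ o, t' o * q (z o) :=
            Finset.sum_congr rfl fun o _ => by rw [hq (z o)]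
          _ = θ * q y₁ + ∑ i, (1 - θ) * t i * q (fun k => |x i k|) := by
            rw [Fintype.sum_option]
            simp only [ht'def, hzdef, Option.elim]
          _ ≤ θ * q y₁ + ∑ i, (1 - θ) * t i * q (x i) := by
            refine add_le_add_right (Finset.sum_le_sum fun i _ => ?_) _
            exact mul_le_mul_of_nonneg_left (habsq (x i)) (mul_nonneg h1θ0 (ht i))
          _ = θ * q y₁ + (1 - θ) * ∑ i, t i * q (x i) := by
            rw [Finset.mul_sum]
            congr 1
            exact Finset.sum_congr rfl fun i _ => by ring
      -- constraint bounds
      have hq'w : ∀ l, q' l w ≤ 0 := by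
        intro l
        have hJ := quadJensen (A' l) (b' l) (c' l) (hA' l) (hb' l) t' z ht' ht's hznn
        have step : q' l w ≤ θ * q' l y₁ + (1 - θ) * ∑ i, t i * q' l (x i) := by
          calc q' l w = (1 / 2 : ℝ) * (w ⬝ᵥ (A' l).mulVec w) + b' l ⬝ᵥ w + c' l := hq' l w
            _ ≤ ∑ o, t' o * ((1 / 2 : ℝ) * (z o ⬝ᵥ (A' l).mulVec (z o)) + b' l ⬝ᵥ z o + c' l) :=
              hJ
            _ = ∑ o, t' o * q' l (z o) :=
              Finset.sum_congr rfl fun o _ => by rw [hq' l (z o)]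
            _ = θ * q' l y₁ + ∑ i, (1 - θ) * t i * q' l (fun k => |x i k|) := by
              rw [Fintype.sum_option]
              simp only [ht'def, hzdef, Option.elim]
            _ ≤ θ * q' l y₁ + ∑ i, (1 - θ) * t i * q' l (x i) := by
              refine add_le_add_right (Finset.sum_le_sum fun i _ => ?_) _
              exact mul_le_mul_of_nonneg_left (habsq' l (x i)) (mul_nonneg h1θ0 (ht i))
            _ = θ * q' l y₁ + (1 - θ) * ∑ i, t i * q' l (x i) := by
              rw [Finset.mul_sum]
              congr 1
              exact Finset.sum_congr rfl fun i _ => by ring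
        have h2 : θ * q' l y₁ ≤ θ * (-δ) := mul_le_mul_of_nonneg_left (hy₁m l) hθ0
        have h3 : (1 - θ) * ∑ i, t i * q' l (x i) ≤ (1 - θ) * ε :=
          mul_le_mul_of_nonneg_left (hεv l) h1θ0
        have h4 : θ * (-δ) + (1 - θ) * ε = 0 := by nlinarith [hθε, h1θε]
        linarith
      have hwX₀ : w ∈ X₀ := by
        rw [hX₀]
        refine ⟨hwX, iSup_le fun l => ?_⟩
        exact_mod_cast EReal.coe_le_coe_iff.mpr (hq'w l) |>.trans_eq EReal.coe_zero.symm
      have hq₀w : q x₀ ≤ q w := hopt w hwX₀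
      have hmain : q x₀ ≤ θ * q y₁ + (1 - θ) * ∑ i, t i * q (x i) := hq₀w.trans hqw
      set G : ℝ := ∑ i, t i * q (x i) with hG
      have h2 : (1 - θ) * (q x₀ - G) ≤ θ * Cc := by
        simp only [hCc]
        nlinarith [hmain]
      have h3 : δ * (q x₀ - G) ≤ ε * Cc := by
        have hm := mul_le_mul_of_nonneg_right h2 hεδ.le
        calc δ * (q x₀ - G) = ((1 - θ) * (ε + δ)) * (q x₀ - G) := by rw [h1θε]
          _ = (1 - θ) * (q x₀ - G) * (ε + δ) := by ring
          _ ≤ θ * Cc * (ε + δ) := hm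
          _ = (θ * (ε + δ)) * Cc := by ring
          _ = ε * Cc := by rw [hθε]
      have h4 : ε * Cc ≤ ε * (δ * K) := mul_le_mul_of_nonneg_left hKC hε0
      have final : q x₀ - G ≤ K * ε := by
        have h5 : δ * (q x₀ - G) ≤ δ * (K * ε) := by nlinarith
        exact le_of_mul_le_mul_left h5 hδ
      have hpv : p v = K * ε := by simp only [hpdef, hε]
      rw [hpv]
      exact final
    -- the conical Mazur–Orlicz inequality
    have key : ∀ (n : ℕ) (t : Fin n → ℝ) (x : Fin n → (Fin N → ℝ)),
        (∀ i, 0 ≤ t i) → (∀ i, x i ∈ X) →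
        ∑ i, t i * (q x₀ - q (x i)) ≤ p (∑ i, t i • F (x i)) := by
      intro n t x ht hxX
      rcases eq_or_lt_of_le (Finset.sum_nonneg fun i _ => ht i : (0 : ℝ) ≤ ∑ i, t i)
        with hT | hT
      · have hz : ∀ i ∈ Finset.univ, t i = 0 :=
          (Finset.sum_eq_zero_iff_of_nonneg fun i _ => ht i).1 hT.symm
        have e0 : ∑ i, t i • F (x i) = 0 :=
          Finset.sum_eq_zero fun i hi => by rw [hz i hi, zero_smul]
        have e1 : ∑ i, t i * (q x₀ - q (x i)) = 0 :=
          Finset.sum_eq_zero fun i hi => by rw [hz i hi, zero_mul]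
        rw [e0, e1, hp0]
      · set T : ℝ := ∑ i, t i with hT'
        have hTne : T ≠ 0 := ne_of_gt hT
        have hclaim := claim n (fun i => t i / T) x (fun i => div_nonneg (ht i) hT.le) hxX
          (by rw [← Finset.sum_div, ← hT', div_self hTne])
        have esum : ∑ i, (t i / T) • F (x i) = T⁻¹ • ∑ i, t i • F (x i) := by
          rw [Finset.smul_sum]
          refine Finset.sum_congr rfl fun i _ => ?_
          rw [smul_smul]
          congr 1
          field_simp
        have epv : p (∑ i, (t i / T) • F (x i)) = T⁻¹ * p (∑ i, t i • F (x i)) := by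
          rw [esum, hphom T⁻¹ (inv_pos.2 hT)]
        rw [epv] at hclaim
        have hmul := mul_le_mul_of_nonneg_left hclaim hT.le
        have e2 : T * (T⁻¹ * p (∑ i, t i • F (x i))) = p (∑ i, t i • F (x i)) := by
          field_simp
        rw [e2] at hmul
        calc ∑ i, t i * (q x₀ - q (x i))
            = ∑ i, (t i * q x₀ - T * (t i / T * q (x i))) :=
              Finset.sum_congr rfl fun i _ => by
                rw [mul_sub]
                congr 1
                field_simp
          _ = (∑ i, t i * q x₀) - T * ∑ i, t i / T * q (x i) := by
              rw [Finset.sum_sub_distrib, ← Finset.mul_sum]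
          _ = T * (q x₀ - ∑ i, t i / T * q (x i)) := by
              rw [← Finset.sum_mul, ← hT']
              ring
          _ ≤ p (∑ i, t i • F (x i)) := hmul
    -- the convex cone of constraint data
    set Cset : Set ((lp (fun _ : Λ => ℝ) ∞) × ℝ) :=
      {y | ∃ (n : ℕ) (t : Fin n → ℝ) (x : Fin n → (Fin N → ℝ)),
        (∀ i, 0 ≤ t i) ∧ (∀ i, x i ∈ X) ∧
        y.1 = ∑ i, t i • F (x i) ∧ y.2 = ∑ i, t i * (q x₀ - q (x i))} with hCset
    have hC0 : ((0 : lp (fun _ : Λ => ℝ) ∞), (0 : ℝ)) ∈ Cset := by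
      exact ⟨0, Fin.elim0, Fin.elim0, fun i => i.elim0, fun i => i.elim0, by simp, by simp⟩
    have hCsingle : ∀ x ∈ X, ((F x, q x₀ - q x) : _ × ℝ) ∈ Cset := by
      intro x hx
      exact ⟨1, fun _ => 1, fun _ => x, fun _ => zero_le_one, fun _ => hx,
        by simp, by simp⟩
    have hCadd : ∀ y₁ ∈ Cset, ∀ y₂ ∈ Cset, y₁ + y₂ ∈ Cset := by
      rintro y₁ ⟨n₁, t₁, xx₁, ht₁, hxx₁, he₁, hf₁⟩ y₂ ⟨n₂, t₂, xx₂, ht₂, hxx₂, he₂, hf₂⟩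
      refine ⟨n₁ + n₂, Fin.append t₁ t₂, Fin.append xx₁ xx₂, ?_, ?_, ?_, ?_⟩
      · intro i
        refine Fin.addCases (fun j => ?_) (fun j => ?_) i
        · rw [Fin.append_left]; exact ht₁ j
        · rw [Fin.append_right]; exact ht₂ j
      · intro i
        refine Fin.addCases (fun j => ?_) (fun j => ?_) i
        · rw [Fin.append_left]; exact hxx₁ j
        · rw [Fin.append_right]; exact hxx₂ j
      · show y₁.1 + y₂.1 = _
        rw [Fin.sum_univ_add]
        simp only [Fin.append_left, Fin.append_right]
        rw [he₁, he₂]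
      · show y₁.2 + y₂.2 = _
        rw [Fin.sum_univ_add]
        simp only [Fin.append_left, Fin.append_right]
        rw [hf₁, hf₂]
    have hCsmul : ∀ a : ℝ, 0 ≤ a → ∀ y ∈ Cset, a • y ∈ Cset := by
      rintro a ha y ⟨n, t, xx, ht, hxx, he, hf⟩
      refine ⟨n, fun i => a * t i, xx, fun i => mul_nonneg ha (ht i), hxx, ?_, ?_⟩
      · show a • y.1 = _
        rw [he, Finset.smul_sum]
        exact Finset.sum_congr rfl fun i _ => by rw [smul_smul]
      · show a * y.2 = _
        rw [hf, Finset.mul_sum]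
        exact Finset.sum_congr rfl fun i _ => by rw [mul_assoc]
    have hMO : ∀ y ∈ Cset, y.2 ≤ p y.1 := by
      rintro y ⟨n, t, xx, ht, hxx, he, hf⟩
      rw [he, hf]
      exact key n t xx ht hxx
    -- the perturbed sublinear functional
    set pp : lp (fun _ : Λ => ℝ) ∞ → ℝ :=
      fun Φ => sInf ((fun y : (lp (fun _ : Λ => ℝ) ∞) × ℝ => p (Φ + y.1) - y.2) '' Cset)
      with hppdef
    have hne' : ∀ Φ, ((fun y : (lp (fun _ : Λ => ℝ) ∞) × ℝ => p (Φ + y.1) - y.2) '' Cset).Nonempty :=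
      fun Φ => ⟨p (Φ + 0) - 0, ⟨(0, 0), hC0, rfl⟩⟩
    have hbdd : ∀ Φ, ∀ r ∈ (fun y : (lp (fun _ : Λ => ℝ) ∞) × ℝ => p (Φ + y.1) - y.2) '' Cset,
        -(p (-Φ)) ≤ r := by
      rintro Φ r ⟨y, hy, rfl⟩
      show -(p (-Φ)) ≤ p (Φ + y.1) - y.2
      have h1 : p y.1 ≤ p (Φ + y.1) + p (-Φ) := by
        have : y.1 = (Φ + y.1) + (-Φ) := by abel
        calc p y.1 = p ((Φ + y.1) + (-Φ)) := by rw [← this]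
          _ ≤ p (Φ + y.1) + p (-Φ) := hpadd _ _
      have h2 := hMO y hy
      linarith
    have hbdd' : ∀ Φ, BddBelow ((fun y : (lp (fun _ : Λ => ℝ) ∞) × ℝ => p (Φ + y.1) - y.2) '' Cset) :=
      fun Φ => ⟨-(p (-Φ)), fun r hr => hbdd Φ r hr⟩
    have hpple : ∀ Φ, ∀ y ∈ Cset, pp Φ ≤ p (Φ + y.1) - y.2 := by
      intro Φ y hy
      exact csInf_le (hbdd' Φ) ⟨y, hy, rfl⟩
    have hppp : ∀ Φ, pp Φ ≤ p Φ := by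
      intro Φ
      have := hpple Φ (0, 0) hC0
      simpa using this
    have hpp0 : 0 ≤ pp 0 := by
      refine le_csInf (hne' 0) ?_
      rintro r ⟨y, hy, rfl⟩
      show (0:ℝ) ≤ p (0 + y.1) - y.2
      have := hMO y hy
      rw [zero_add]
      linarith
    have hppadd : ∀ Φ Ψ, pp (Φ + Ψ) ≤ pp Φ + pp Ψ := by
      intro Φ Ψ
      have hstep : ∀ y₁ ∈ Cset, ∀ y₂ ∈ Cset,
          pp (Φ + Ψ) ≤ (p (Φ + y₁.1) - y₁.2) + (p (Ψ + y₂.1) - y₂.2) := by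
        intro y₁ hy₁ y₂ hy₂
        have hmem := hCadd y₁ hy₁ y₂ hy₂
        have h1 := hpple (Φ + Ψ) (y₁ + y₂) hmem
        have h2 : p ((Φ + Ψ) + (y₁ + y₂).1) ≤ p (Φ + y₁.1) + p (Ψ + y₂.1) := by
          have he : (Φ + Ψ) + (y₁ + y₂).1 = (Φ + y₁.1) + (Ψ + y₂.1) := by
            show (Φ + Ψ) + (y₁.1 + y₂.1) = _
            abel
          rw [he]; exact hpadd _ _
        have h3 : (y₁ + y₂).2 = y₁.2 + y₂.2 := rfl
        rw [h3] at h1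
        linarith
      have h4 : pp (Φ + Ψ) - pp Ψ ≤ pp Φ := by
        refine le_csInf (hne' Φ) ?_
        rintro r ⟨y₁, hy₁, rfl⟩
        show pp (Φ + Ψ) - pp Ψ ≤ p (Φ + y₁.1) - y₁.2
        rw [sub_le_iff_le_add', ← sub_le_iff_le_add]
        refine le_csInf (hne' Ψ) ?_
        rintro r' ⟨y₂, hy₂, rfl⟩
        show pp (Φ + Ψ) - (p (Φ + y₁.1) - y₁.2) ≤ p (Ψ + y₂.1) - y₂.2
        have := hstep y₁ hy₁ y₂ hy₂
        linarith
      linarith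
    have hpphom : ∀ a : ℝ, 0 < a → ∀ Φ, pp (a • Φ) = a * pp Φ := by
      intro a ha Φ
      apply le_antisymm
      · have h1 : pp (a • Φ) / a ≤ pp Φ := by
          refine le_csInf (hne' Φ) ?_
          rintro r ⟨y, hy, rfl⟩
          show pp (a • Φ) / a ≤ p (Φ + y.1) - y.2
          rw [div_le_iff₀ ha]
          have hmem := hCsmul a ha.le y hy
          have h2 := hpple (a • Φ) (a • y) hmem
          have h3 : (a • y).1 = a • y.1 := rfl
          have h4 : (a • y).2 = a * y.2 := rfl
          rw [h3, h4] at h2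
          have h5 : a • Φ + a • y.1 = a • (Φ + y.1) := by rw [smul_add]
          rw [h5, hphom a ha] at h2
          calc pp (a • Φ) ≤ a * p (Φ + y.1) - a * y.2 := h2
            _ = (p (Φ + y.1) - y.2) * a := by ring
        calc pp (a • Φ) = (pp (a • Φ) / a) * a := by field_simp
          _ ≤ pp Φ * a := mul_le_mul_of_nonneg_right h1 ha.le
          _ = a * pp Φ := by ring
      · refine le_csInf (hne' (a • Φ)) ?_
        rintro r ⟨y, hy, rfl⟩
        show a * pp Φ ≤ p (a • Φ + y.1) - y.2
        have hmem := hCsmul a⁻¹ (inv_nonneg.2 ha.le) y hy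
        have h2 := hpple Φ (a⁻¹ • y) hmem
        have h3 : (a⁻¹ • y).1 = a⁻¹ • y.1 := rfl
        have h4 : (a⁻¹ • y).2 = a⁻¹ * y.2 := rfl
        rw [h3, h4] at h2
        have h5 : Φ + a⁻¹ • y.1 = a⁻¹ • (a • Φ + y.1) := by
          rw [smul_add, inv_smul_smul₀ ha.ne']
        rw [h5, hphom a⁻¹ (inv_pos.2 ha)] at h2
        have := mul_le_mul_of_nonneg_left h2 ha.le
        calc a * pp Φ ≤ a * (a⁻¹ * p (a • Φ + y.1) - a⁻¹ * y.2) := this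
          _ = (a * a⁻¹) * p (a • Φ + y.1) - (a * a⁻¹) * y.2 := by ring
          _ = p (a • Φ + y.1) - y.2 := by rw [mul_inv_cancel₀ ha.ne']; ring
    -- Hahn–Banach extension
    obtain ⟨g, -, hgle⟩ :=
      exists_extension_of_le_sublinear ⟨⊥, 0⟩ pp hpphom hppadd
        (fun x => by
          have hx0 : (x : lp (fun _ : Λ => ℝ) ∞) = 0 :=
            (Submodule.mem_bot ℝ).mp x.2
          rw [hx0]
          simpa using hpp0)
    have hgbound : ∀ Φ, ‖g Φ‖ ≤ K * ‖Φ‖ := by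
      intro Φ
      rw [Real.norm_eq_abs, abs_le]
      constructor
      · have h1 := (hgle (-Φ)).trans ((hppp (-Φ)).trans (hpnorm (-Φ)))
        rw [map_neg, norm_neg] at h1
        linarith
      · exact (hgle Φ).trans ((hppp Φ).trans (hpnorm Φ))
    set L : lp (fun _ : Λ => ℝ) ∞ →L[ℝ] ℝ := g.mkContinuous K hgbound with hLdef
    have hLapp : ∀ Φ, L Φ = g Φ := fun Φ => rfl
    -- lower bounds from the cone
    have hglow : ∀ x ∈ X, q x₀ - q x ≤ g (F x) := by
      intro x hx
      have h1 := (hgle (-(F x))).trans (hpple (-(F x)) _ (hCsingle x hx))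
      have h2 : -(F x) + (F x, q x₀ - q x).1 = 0 := by simp
      rw [h2, hp0, map_neg] at h1
      simp only at h1
      linarith
    have hSF₀ : p (F x₀) = 0 := by
      have hS1 : S (F x₀) ≤ 0 := hSmax _ _ fun l => by
        rw [hF x₀ hx₀X l]; exact hx₀feas l
      simp only [hpdef]
      rw [max_eq_right hS1, mul_zero]
    have hLF₀ : L (F x₀) = 0 := by
      rw [hLapp]
      have h1 : g (F x₀) ≤ 0 := by
        have := (hgle (F x₀)).trans (hppp (F x₀))
        rw [hSF₀] at this
        exact this
      have h2 := hglow x₀ hx₀X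
      simp only [sub_self] at h2
      linarith
    refine ⟨L, ?_, ?_, hx₀mem'.2, hLF₀⟩
    · intro Φ hΦ
      have h1 : p (-Φ) = 0 := by
        have hS1 : S (-Φ) ≤ 0 := hSmax _ _ fun l => by
          have : (-Φ) l = -(Φ l) := rfl
          rw [this]
          linarith [hΦ l]
        simp only [hpdef]
        rw [max_eq_right hS1, mul_zero]
      have h2 := (hgle (-Φ)).trans (hppp (-Φ))
      rw [h1, map_neg] at h2
      rw [hLapp]
      linarith
    · intro x hx
      rw [hLF₀, hLapp]
      have := hglow x hx
      linarith
  · -- converse direction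
    rintro ⟨L, hLpos, hLmin, hLsup, hLzero⟩
    have hx₀mem : x₀ ∈ X₀ := by rw [hX₀]; exact ⟨hx₀X, hLsup⟩
    refine ⟨hx₀mem, fun x hx => ?_⟩
    rw [hX₀] at hx
    obtain ⟨hxX, hxs⟩ := hx
    have hxf : ∀ l, q' l x ≤ 0 := by
      intro l
      have h := (le_iSup (fun l => ((q' l x : ℝ) : EReal)) l).trans hxs
      exact_mod_cast h
    have hLFx : L (F x) ≤ 0 := by
      have hpos := hLpos (-(F x)) (fun l => by
        have : (-(F x)) l = -((F x) l) := rfl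
        rw [this, hF x hxX l]
        linarith [hxf l])
      rw [map_neg] at hpos
      linarith
    have hm := hLmin x hxX
    rw [hLzero] at hm
    linarith
end
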